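/- Let B be a commutative ring and A a subring of B. Then the following two conditions are equivalent: (1) for every f ∈ B, if f² ∈ A and f³ ∈ A then f ∈ A; (2) for every f ∈ B, if there exists N ∈ ℕ such that fⁿ ∈ A for all integers n > N, then f ∈ A. -/
import Mathlib


/-- A subring `A` of a commutative ring `B` is *seminormal* in `B` if it satisfies
these equivalent conditions. -/
theorem seminormal_iff {B : Type*} [CommRing B] (A : Subring B) :
    (∀ f : B, f ^ 2 ∈ A → f ^ 3 ∈ A → f ∈ A) ↔
    (∀ f : B, (∃ N : ℕ, ∀ n : ℕ, N < n → f ^ n ∈ A) → f ∈ A) := by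
  constructor
  · intro h1 f ⟨N, hN⟩
    have key : ∀ j : ℕ, ∀ n : ℕ, 0 < n → N + 1 - j ≤ n → f ^ n ∈ A := by
      intro j
      induction j with
      | zero => intro n hn hle; exact hN n (by omega)
      | succ j ih =>
        intro n hn hle
        have h2 : f ^ (2 * n) ∈ A := ih (2 * n) (by omega) (by omega)
        have h3 : f ^ (3 * n) ∈ A := ih (3 * n) (by omega) (by omega)
        have := h1 (f ^ n) (by rw [← pow_mul, Nat.mul_comm]; exact h2)
          (by rw [← pow_mul, Nat.mul_comm]; exact h3)
        exact this
    have := key (N + 1) 1 (by omega) (by omega)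
    simpa using this
  · intro h2 f hf2 hf3
    apply h2 f
    refine ⟨1, ?_⟩
    intro n hn
    induction n using Nat.strong_induction_on with
    | _ n ih =>
      rcases Nat.lt_or_ge n 4 with h | h
      · interval_cases n
        · exact hf2
        · exact hf3
      · have hm : f ^ (n - 2) ∈ A := ih (n - 2) (by omega) (by omega)
        have : f ^ n = f ^ 2 * f ^ (n - 2) := by
          rw [← pow_add]; congr 1; omega
        rw [this]
        exact A.mul_mem hf2 hm
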